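/- In the periodic 1D setting, for every index i ∈ ℤ/nℤ, the Local Mixup minimizer converges pointwise to the training mean: f_K(i) → E[y] as K → ∞. -/

import Mathlib

/-- The training mean `E[y] = (1/n)·Σ_{i ∈ ℤ/nℤ} y_i`. -/
noncomputable def trainMean (n : ℕ) [NeZero n] (y : ZMod n → ℝ) : ℝ :=
  (1 / (n : ℝ)) * ∑ i, y i


/-- `A_K(i) = (1/K)·Σ_{k=1}^{K−1} ((K−k)·y_{i−k} + k·y_{i+K−k})` (so `A_1(i) = 0`). -/
noncomputable def mixA (n : ℕ) (y : ZMod n → ℝ) (i : ZMod n) (K : ℕ) : ℝ :=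
  (1 / (K : ℝ)) * ∑ k ∈ Finset.Icc 1 (K - 1),
    (((K : ℝ) - (k : ℝ)) * y (i - (k : ZMod n)) + (k : ℝ) * y (i + ((K - k : ℕ) : ZMod n)))

/-- `S_1(i) = 0` and `S_{K+1}(i) = S_K(i) + A_{K+1}(i)`. -/
noncomputable def mixS (n : ℕ) (y : ZMod n → ℝ) (i : ZMod n) : ℕ → ℝ
  | 0 => 0
  | K + 1 => mixS n y i K + mixA n y i (K + 1)

/-- The Local Mixup minimizer `f_K(i) = (2/(K·(K+3)))·(2K·y_i + S_K(i))`. -/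
noncomputable def mixF (n : ℕ) (y : ZMod n → ℝ) (K : ℕ) (i : ZMod n) : ℝ :=
  (2 / ((K : ℝ) * ((K : ℝ) + 3))) * (2 * (K : ℝ) * y i + mixS n y i K)




open Finset

section Aux
variable (n : ℕ) [NeZero n] (y : ZMod n → ℝ) (i : ZMod n)

lemma period_sum_add (x : ZMod n) :
    ∑ k ∈ range n, y (x + (k : ZMod n)) = ∑ j, y j := by
  refine Finset.sum_nbij' (fun k => x + (k : ZMod n)) (fun z => (z - x).val) ?_ ?_ ?_ ?_ ?_
  · intro a _; exact mem_univ _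
  · intro a _; exact mem_range.2 (ZMod.val_lt _)
  · intro a ha
    simp only [add_sub_cancel_left]
    exact ZMod.val_cast_of_lt (mem_range.1 ha)
  · intro a _
    rw [ZMod.natCast_rightInverse (a - x)]
    ring
  · intro a _; rfl

lemma period_sum_sub (x : ZMod n) :
    ∑ k ∈ range n, y (x - (k : ZMod n)) = ∑ j, y j := by
  refine Finset.sum_nbij' (fun k => x - (k : ZMod n)) (fun z => (x - z).val) ?_ ?_ ?_ ?_ ?_
  · intro a _; exact mem_univ _
  · intro a _; exact mem_range.2 (ZMod.val_lt _)
  · intro a ha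
    simp only [sub_sub_cancel]
    exact ZMod.val_cast_of_lt (mem_range.1 ha)
  · intro a _
    rw [ZMod.natCast_rightInverse (x - a)]
    ring
  · intro a _; rfl

end Aux

section Aux2
variable (n : ℕ) [NeZero n] (y : ZMod n → ℝ) (i : ZMod n)

/-- symmetrized signal -/
noncomputable def gg (k : ℕ) : ℝ := y (i - (k : ZMod n)) + y (i + (k : ZMod n))

/-- zero-mean part -/
noncomputable def hh (k : ℕ) : ℝ := gg n y i k - 2 * trainMean n y

lemma hh_period_sum (a : ℕ) : ∑ k ∈ Ioc a (a + n), hh n y i k = 0 := by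
  have h1 : Ioc a (a + n) = Ico (a + 1) (a + 1 + n) := by
    rw [← Finset.Icc_add_one_left_eq_Ioc, ← Finset.Ico_add_one_right_eq_Icc]
    congr 1
    omega
  rw [h1, Finset.sum_Ico_eq_sum_range]
  have h2 : a + 1 + n - (a + 1) = n := by omega
  rw [h2]
  have key : ∀ k ∈ range n, hh n y i (a + 1 + k) =
      (y ((i - ((a+1 : ℕ) : ZMod n)) - (k : ZMod n))
        + y ((i + ((a+1 : ℕ) : ZMod n)) + (k : ZMod n))) - 2 * trainMean n y := by
    intro k _
    unfold hh gg
    push_cast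
    ring_nf
  rw [Finset.sum_congr rfl key]
  have hn : (n : ℝ) ≠ 0 := Nat.cast_ne_zero.2 (NeZero.ne n)
  rw [Finset.sum_sub_distrib, Finset.sum_add_distrib, period_sum_sub, period_sum_add,
    Finset.sum_const, Finset.card_range]
  unfold trainMean
  field_simp
  ring_nf
  simp [hn]

/-- bound on partial sums of `hh` -/
noncomputable def BB : ℝ := ∑ k ∈ Ioc 0 n, |hh n y i k|

lemma BB_nonneg : 0 ≤ BB n y i := Finset.sum_nonneg fun _ _ => abs_nonneg _

lemma Q_bound : ∀ s : ℕ, |∑ k ∈ Ioc 0 s, hh n y i k| ≤ BB n y i := by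
  intro s
  induction s using Nat.strong_induction_on with
  | _ s IH =>
    by_cases hs : s ≤ n
    · calc |∑ k ∈ Ioc 0 s, hh n y i k| ≤ ∑ k ∈ Ioc 0 s, |hh n y i k| :=
            Finset.abs_sum_le_sum_abs _ _
        _ ≤ BB n y i := Finset.sum_le_sum_of_subset_of_nonneg
            (Finset.Ioc_subset_Ioc le_rfl hs) (fun _ _ _ => abs_nonneg _)
    · push_neg at hs
      have hn1 : 1 ≤ n := Nat.one_le_iff_ne_zero.2 (NeZero.ne n)
      have hsplit : ∑ k ∈ Ioc 0 (s - n), hh n y i k + ∑ k ∈ Ioc (s - n) s, hh n y i k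
          = ∑ k ∈ Ioc 0 s, hh n y i k :=
        Finset.sum_Ioc_consecutive _ (by omega) (by omega)
      have hper : ∑ k ∈ Ioc (s - n) s, hh n y i k = 0 := by
        have := hh_period_sum n y i (s - n)
        rwa [show s - n + n = s by omega] at this
      rw [← hsplit, hper, add_zero]
      exact IH (s - n) (by omega)

/-- swap lemma -/
lemma swap_sum (m : ℕ) :
    ∑ k ∈ Ioc 0 m, (((m : ℝ) + 1) - (k : ℝ)) * gg n y i k
      = ∑ s ∈ Ioc 0 m, ∑ k ∈ Ioc 0 s, gg n y i k := by
  induction m with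
  | zero => simp
  | succ m IH =>
    rw [Finset.sum_Ioc_succ_top (Nat.zero_le _), Finset.sum_Ioc_succ_top (Nat.zero_le _)]
    have expand : ∀ k ∈ Ioc 0 m, (((m : ℝ) + 1 + 1) - (k : ℝ)) * gg n y i k
        = (((m : ℝ) + 1) - (k : ℝ)) * gg n y i k + gg n y i k := by
      intro k _; push_cast; ring
    push_cast
    rw [Finset.sum_congr rfl expand, Finset.sum_add_distrib, IH]
    rw [Finset.sum_Ioc_succ_top (Nat.zero_le _)]
    push_cast
    ring

end Aux2


section Aux3
variable (n : ℕ) [NeZero n] (y : ZMod n → ℝ) (i : ZMod n)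

lemma gauss (t : ℕ) : ∑ s ∈ Ioc 0 t, (s : ℝ) = (t : ℝ) * ((t : ℝ) + 1) / 2 := by
  induction t with
  | zero => simp
  | succ t IH =>
    rw [Finset.sum_Ioc_succ_top (Nat.zero_le _), IH]
    push_cast; ring

lemma mixA_eq (m : ℕ) (hm : 1 ≤ m) :
    mixA n y i m = (1 / (m : ℝ)) * ∑ k ∈ Ioc 0 (m - 1), ((m : ℝ) - (k : ℝ)) * gg n y i k := by
  unfold mixA
  rw [← Finset.Icc_add_one_left_eq_Ioc]
  congr 1
  rw [Finset.sum_add_distrib]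
  have h2 : ∑ k ∈ Icc 1 (m-1), (k : ℝ) * y (i + ((m - k : ℕ) : ZMod n))
      = ∑ k ∈ Icc 1 (m-1), ((m : ℝ) - (k : ℝ)) * y (i + (k : ZMod n)) := by
    refine Finset.sum_nbij' (fun k => m - k) (fun k => m - k) ?_ ?_ ?_ ?_ ?_
    · intro a ha; simp only [mem_Icc] at ha ⊢; omega
    · intro a ha; simp only [mem_Icc] at ha ⊢; omega
    · intro a ha; simp only [mem_Icc] at ha; show m - (m - a) = a; omega
    · intro a ha; simp only [mem_Icc] at ha; show m - (m - a) = a; omega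
    · intro a ha
      simp only [mem_Icc] at ha
      congr 1
      rw [Nat.cast_sub (by omega : a ≤ m)]
      ring
  rw [h2, ← Finset.sum_add_distrib]
  refine Finset.sum_congr rfl fun k _ => ?_
  unfold gg
  ring

lemma mixA_bound (m : ℕ) (hm : 1 ≤ m) :
    |mixA n y i m - trainMean n y * ((m : ℝ) - 1)| ≤ BB n y i := by
  have hm0 : (0:ℝ) < (m : ℝ) := by exact_mod_cast hm
  have hmc : ((m-1 : ℕ) : ℝ) = (m : ℝ) - 1 := by
    rw [Nat.cast_sub hm]; norm_num
  have key : mixA n y i m = (1/(m:ℝ)) * ∑ s ∈ Ioc 0 (m-1),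
      ((∑ k ∈ Ioc 0 s, hh n y i k) + 2 * trainMean n y * (s:ℝ)) := by
    rw [mixA_eq n y i m hm]
    have h1 : ∑ k ∈ Ioc 0 (m-1), ((m:ℝ) - (k:ℝ)) * gg n y i k
        = ∑ s ∈ Ioc 0 (m-1), ∑ k ∈ Ioc 0 s, gg n y i k := by
      rw [← swap_sum n y i (m-1)]
      refine Finset.sum_congr rfl fun k _ => ?_
      rw [hmc]
      ring
    rw [h1]
    congr 1
    refine Finset.sum_congr rfl fun s _ => ?_
    have hg : ∀ k ∈ Ioc 0 s, gg n y i k = hh n y i k + 2 * trainMean n y := by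
      intro k _; unfold hh; ring
    rw [Finset.sum_congr rfl hg, Finset.sum_add_distrib, Finset.sum_const, Nat.card_Ioc]
    simp only [Nat.sub_zero, nsmul_eq_mul]
    ring
  have expand : mixA n y i m - trainMean n y * ((m:ℝ) - 1)
      = (1/(m:ℝ)) * ∑ s ∈ Ioc 0 (m-1), (∑ k ∈ Ioc 0 s, hh n y i k) := by
    rw [key, Finset.sum_add_distrib]
    have h3 : ∑ s ∈ Ioc 0 (m-1), 2 * trainMean n y * (s:ℝ)
        = 2 * trainMean n y * (((m:ℝ)-1) * ((m:ℝ)-1+1) / 2) := by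
      rw [← Finset.mul_sum, gauss, hmc]
    rw [h3]
    field_simp
    ring
  rw [expand, abs_mul, abs_of_pos (by positivity : (0:ℝ) < 1/(m:ℝ))]
  have hsum : |∑ s ∈ Ioc 0 (m-1), (∑ k ∈ Ioc 0 s, hh n y i k)|
      ≤ ((m:ℝ) - 1) * BB n y i := by
    calc |∑ s ∈ Ioc 0 (m-1), (∑ k ∈ Ioc 0 s, hh n y i k)|
        ≤ ∑ s ∈ Ioc 0 (m-1), |∑ k ∈ Ioc 0 s, hh n y i k| := Finset.abs_sum_le_sum_abs _ _
      _ ≤ (Ioc 0 (m-1)).card • BB n y i :=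
          Finset.sum_le_card_nsmul _ _ _ (fun s _ => Q_bound n y i s)
      _ = ((m:ℝ) - 1) * BB n y i := by
          rw [Nat.card_Ioc, Nat.sub_zero, nsmul_eq_mul, hmc]
  calc (1/(m:ℝ)) * |∑ s ∈ Ioc 0 (m-1), (∑ k ∈ Ioc 0 s, hh n y i k)|
      ≤ (1/(m:ℝ)) * (((m:ℝ) - 1) * BB n y i) := by
        apply mul_le_mul_of_nonneg_left hsum (by positivity)
    _ ≤ BB n y i := by
        rw [div_mul_eq_mul_div, one_mul, div_le_iff₀ hm0]
        nlinarith [BB_nonneg n y i, hm0]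

end Aux3

section Aux4
variable (n : ℕ) [NeZero n] (y : ZMod n → ℝ) (i : ZMod n)

lemma mixS_eq_sum (K : ℕ) : mixS n y i K = ∑ m ∈ Ioc 0 K, mixA n y i m := by
  induction K with
  | zero => simp [mixS]
  | succ K IH =>
    rw [Finset.sum_Ioc_succ_top (Nat.zero_le _)]
    show mixS n y i K + mixA n y i (K + 1) = _
    rw [IH]

lemma sum_m_sub_one (K : ℕ) :
    ∑ m ∈ Ioc 0 K, ((m : ℝ) - 1) = (K : ℝ) * ((K : ℝ) - 1) / 2 := by
  induction K with
  | zero => simp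
  | succ K IH =>
    rw [Finset.sum_Ioc_succ_top (Nat.zero_le _), IH]
    push_cast; ring

lemma mixS_bound (K : ℕ) :
    |mixS n y i K - trainMean n y * ((K : ℝ) * ((K : ℝ) - 1) / 2)| ≤ (K : ℝ) * BB n y i := by
  rw [mixS_eq_sum, ← sum_m_sub_one K, Finset.mul_sum, ← Finset.sum_sub_distrib]
  calc |∑ m ∈ Ioc 0 K, (mixA n y i m - trainMean n y * ((m:ℝ) - 1))|
      ≤ ∑ m ∈ Ioc 0 K, |mixA n y i m - trainMean n y * ((m:ℝ) - 1)| :=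
        Finset.abs_sum_le_sum_abs _ _
    _ ≤ (Ioc 0 K).card • BB n y i := Finset.sum_le_card_nsmul _ _ _
        (fun m hm => mixA_bound n y i m (mem_Ioc.1 hm).1)
    _ = (K : ℝ) * BB n y i := by rw [Nat.card_Ioc, Nat.sub_zero, nsmul_eq_mul]

open Filter in
theorem localMixup_minimizer_limit_aux :
    Tendsto (fun K : ℕ => mixF n y K i) atTop (nhds (trainMean n y)) := by
  set c := trainMean n y with hc
  set B := BB n y i with hB
  have hBnn : 0 ≤ B := BB_nonneg n y i
  rw [← tendsto_sub_nhds_zero_iff]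
  apply squeeze_zero_norm' (a := fun K : ℕ => (4 * |y i| + 4 * |c| + 2 * B) / ((K : ℝ) + 3))
  · filter_upwards [eventually_ge_atTop 1] with K hK
    have hk0 : (0:ℝ) < (K : ℝ) := by exact_mod_cast hK
    have hk3 : (0:ℝ) < (K : ℝ) + 3 := by linarith
    set E : ℝ := mixS n y i K - c * ((K:ℝ) * ((K:ℝ) - 1) / 2) with hE
    have hEb : |E| ≤ (K:ℝ) * B := mixS_bound n y i K
    have hid : mixF n y K i - c
        = 4 * y i / ((K:ℝ) + 3) - 4 * c / ((K:ℝ) + 3) + 2 * E / ((K:ℝ) * ((K:ℝ) + 3)) := by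
      have hSm : mixS n y i K = c * ((K:ℝ) * ((K:ℝ) - 1) / 2) + E := by rw [hE]; ring
      unfold mixF
      rw [hSm]
      field_simp
      ring
    rw [Real.norm_eq_abs, hid]
    have h1 : |4 * y i / ((K:ℝ) + 3)| = 4 * |y i| / ((K:ℝ) + 3) := by
      rw [abs_div, abs_of_pos hk3, abs_mul]; norm_num
    have h2 : |4 * c / ((K:ℝ) + 3)| = 4 * |c| / ((K:ℝ) + 3) := by
      rw [abs_div, abs_of_pos hk3, abs_mul]; norm_num
    have h3 : |2 * E / ((K:ℝ) * ((K:ℝ) + 3))| ≤ 2 * B / ((K:ℝ) + 3) := by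
      have hkk : (0:ℝ) < (K:ℝ) * ((K:ℝ) + 3) := mul_pos hk0 hk3
      rw [abs_div, abs_of_pos hkk, abs_mul, abs_two]
      rw [div_le_div_iff₀ hkk hk3]
      nlinarith [abs_nonneg E, hEb, hk3, hk0]
    calc |4 * y i / ((K:ℝ) + 3) - 4 * c / ((K:ℝ) + 3) + 2 * E / ((K:ℝ) * ((K:ℝ) + 3))|
        ≤ |4 * y i / ((K:ℝ) + 3) - 4 * c / ((K:ℝ) + 3)| + |2 * E / ((K:ℝ) * ((K:ℝ) + 3))| :=
          abs_add_le _ _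
      _ ≤ (|4 * y i / ((K:ℝ) + 3)| + |4 * c / ((K:ℝ) + 3)|) + 2 * B / ((K:ℝ) + 3) :=
          add_le_add (abs_sub _ _) h3
      _ = (4 * |y i| + 4 * |c| + 2 * B) / ((K:ℝ) + 3) := by
          rw [h1, h2]; field_simp
  · apply Tendsto.div_atTop (tendsto_const_nhds)
    exact tendsto_atTop_add_const_right _ 3 tendsto_natCast_atTop_atTop

end Aux4

open Filter in
/-- In the periodic 1D setting, for every index `i ∈ ℤ/nℤ`, the Local Mixup
minimizer converges pointwise to the training mean: `f_K(i) → E[y]` as `K → ∞`. -/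
theorem localMixup_minimizer_limit (n : ℕ) [NeZero n] (y : ZMod n → ℝ) (i : ZMod n) :
    Tendsto (fun K : ℕ => mixF n y K i) atTop (nhds (trainMean n y)) :=
  localMixup_minimizer_limit_aux n y i
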